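/- arXiv:1508.03613 — 3 statements merged into one kernel-verified Lean document; each statement's English description precedes it below -/
import Mathlib

section
/- Let (M,·) be a moving semigroup and let A ⊆ M be IIP. Then there exists a nonprincipal idempotent ultrafilter 𝓤 on M with A ∈ 𝓤. -/
open Filter FirstOrder FirstOrder.Language

attribute [local instance] Ultrafilter.mul

/-! ## Combinatorial notions in a semigroup -/

/-- `X` is an IP set: it contains `FP u` (all finite products, in increasing order of indices,
of distinct terms) of some sequence `u`. -/
def IsIP {M : Type*} [Semigroup M] (X : Set M) : Prop :=
  ∃ u : Stream' M, Hindman.FP u ⊆ X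

/-- `X` is IIP (infinitely IP): it contains an infinite set of the form `FP u`. -/
def IsIIP {M : Type*} [Semigroup M] (X : Set M) : Prop :=
  ∃ u : Stream' M, Hindman.FP u ⊆ X ∧ (Hindman.FP u).Infinite

/-- `X` is DIP (distinctly IP): it contains `FP u` for an injective sequence `u`. -/
def IsDIP {M : Type*} [Semigroup M] (X : Set M) : Prop :=
  ∃ u : Stream' M, Function.Injective u ∧ Hindman.FP u ⊆ X

/-- An ultrafilter is nonprincipal if it is not of the form `{A | a ∈ A}` for any `a`. -/
def Ultrafilter.Nonprincipal {M : Type*} (U : Ultrafilter M) : Prop :=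
  ∀ a : M, U ≠ pure a

/-- A semigroup is moving if the product of two nonprincipal ultrafilters
(for the ultrafilter product `A ∈ U * V ↔ {m | {n | m * n ∈ A} ∈ V} ∈ U`) is nonprincipal. -/
def IsMoving (M : Type*) [Semigroup M] : Prop :=
  ∀ U V : Ultrafilter M, U.Nonprincipal → V.Nonprincipal → (U * V).Nonprincipal

/-! ## Types over a semigroup structure -/

/-- Formulas in one free variable, with parameters from `M`. -/
abbrev Form1 (L : Language) (M : Type*) := L.Formula (M ⊕ Fin 1)

/-- Formulas in two free variables (`x` and `y`), with parameters from `M`. -/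
abbrev Form2 (L : Language) (M : Type*) := L.Formula (M ⊕ Fin 2)

/-- Realization of a 1-variable formula with parameters at the point `a`. -/
def Realize1 {L : Language} {M : Type*} (S : L.Structure M) (φ : Form1 L M) (a : M) : Prop :=
  @Formula.Realize L M S _ φ (Sum.elim id fun _ => a)

/-- Realization of a 2-variable formula with parameters at the pair `(a, b)`. -/
def Realize2 {L : Language} {M : Type*} (S : L.Structure M) (φ : Form2 L M) (a b : M) : Prop :=
  @Formula.Realize L M S _ φ (Sum.elim id ![a, b])

/-- A complete 1-type over the structure `S` (with parameters for all elements of `M`):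
a complete, finitely satisfiable (in `S`) set of formulas in one free variable. -/
def IsCompleteType1 {L : Language} {M : Type*} (S : L.Structure M)
    (p : Set (Form1 L M)) : Prop :=
  (∀ φ : Form1 L M, φ ∈ p ↔ φ.not ∉ p) ∧
    ∀ s : Finset (Form1 L M), ↑s ⊆ p → ∃ a : M, ∀ φ ∈ s, Realize1 S φ a

/-- A complete 2-type over the structure `S` (with parameters for all elements of `M`). -/
def IsCompleteType2 {L : Language} {M : Type*} (S : L.Structure M)
    (q : Set (Form2 L M)) : Prop :=
  (∀ φ : Form2 L M, φ ∈ q ↔ φ.not ∉ q) ∧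
    ∀ s : Finset (Form2 L M), ↑s ⊆ q → ∃ a b : M, ∀ φ ∈ s, Realize2 S φ a b

/-- `substX u φ` is `φ(u, y)`: the element `u` is substituted for the variable `x`. -/
def substX {L : Language} {M : Type*} (u : M) (φ : Form2 L M) : Form2 L M :=
  φ.subst (Sum.elim (fun m => Term.var (Sum.inl m))
    ![Term.var (Sum.inl u), Term.var (Sum.inr 1)])

/-- A 2-type `q(x, y)` is independent if for every `φ(x, y) ∈ q` there is `u ∈ M` with
`φ(u, y) ∈ q`. -/
def IsIndependent {L : Language} {M : Type*} (q : Set (Form2 L M)) : Prop :=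
  ∀ φ ∈ q, ∃ u : M, substX u φ ∈ q

/-- `toX φ` views the 1-variable formula `φ` as a 2-variable formula `φ(x)`. -/
def toX {L : Language} {M : Type*} (φ : Form1 L M) : Form2 L M :=
  φ.subst (Sum.elim (fun m => Term.var (Sum.inl m)) fun _ => Term.var (Sum.inr 0))

/-- `toY φ` views the 1-variable formula `φ` as a 2-variable formula `φ(y)`. -/
def toY {L : Language} {M : Type*} (φ : Form1 L M) : Form2 L M :=
  φ.subst (Sum.elim (fun m => Term.var (Sum.inl m)) fun _ => Term.var (Sum.inr 1))

/-- `toXY f φ` is `φ(x · y)`, where `f` is the distinguished binary function symbol. -/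
def toXY {L : Language} {M : Type*} (f : L.Functions 2) (φ : Form1 L M) : Form2 L M :=
  φ.subst (Sum.elim (fun m => Term.var (Sum.inl m))
    fun _ => Term.func f ![Term.var (Sum.inr 0), Term.var (Sum.inr 1)])

/-- A complete 1-type `p` over `S` is idempotent (with respect to the binary function symbol `f`
interpreted as the semigroup operation) if there is an independent complete 2-type `q(x, y)` with
`p(x) ⊆ q`, `p(y) ⊆ q` and `p(x · y) ⊆ q`. -/
def IsIdempotentType {L : Language} {M : Type*} (S : L.Structure M) (f : L.Functions 2)
    (p : Set (Form1 L M)) : Prop :=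
  IsCompleteType1 S p ∧
    ∃ q : Set (Form2 L M), IsCompleteType2 S q ∧ IsIndependent q ∧
      (∀ φ ∈ p, toX φ ∈ q) ∧ (∀ φ ∈ p, toY φ ∈ q) ∧ (∀ φ ∈ p, toXY f φ ∈ q)

/-- A 1-type over `S` is principal if it is realized by an element of `M`. -/
def IsPrincipalType {L : Language} {M : Type*} (S : L.Structure M)
    (p : Set (Form1 L M)) : Prop :=
  ∃ a : M, ∀ φ ∈ p, Realize1 S φ a

attribute [local instance] Ultrafilter.semigroup

lemma Ultrafilter.nonprincipal_iff {M : Type*} (U : Ultrafilter M) :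
    U.Nonprincipal ↔ ∀ x : M, ({x}ᶜ : Set M) ∈ U := by
  unfold Ultrafilter.Nonprincipal
  refine forall_congr' fun x => ?_
  rw [Ultrafilter.compl_mem_iff_notMem, not_iff_not, ← Ultrafilter.coe_inj,
    Ultrafilter.coe_pure, Filter.NeBot.eq_pure_iff U.neBot, Ultrafilter.mem_coe]

lemma FP_cases {M : Type*} [Semigroup M] {a : Stream' M} {m : M} (hm : m ∈ Hindman.FP a) :
    m = a.head ∨ m ∈ Hindman.FP a.tail ∨ ∃ m' ∈ Hindman.FP a.tail, m = a.head * m' := by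
  cases hm with
  | head' => exact Or.inl rfl
  | tail' _ _ h => exact Or.inr (Or.inl h)
  | cons' _ m' h => exact Or.inr (Or.inr ⟨m', h, rfl⟩)

lemma FP_tail_infinite {M : Type*} [Semigroup M] {a : Stream' M}
    (h : (Hindman.FP a).Infinite) : (Hindman.FP a.tail).Infinite := by
  by_contra hfin
  rw [Set.not_infinite] at hfin
  apply h
  have : Hindman.FP a ⊆
      insert a.head (Hindman.FP a.tail ∪ (a.head * ·) '' Hindman.FP a.tail) := by
    intro m hm
    rcases FP_cases hm with rfl | h | ⟨m', hm', rfl⟩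
    · exact Set.mem_insert _ _
    · exact Set.mem_insert_of_mem _ (Or.inl h)
    · exact Set.mem_insert_of_mem _ (Or.inr ⟨m', hm', rfl⟩)
  exact Set.Finite.subset ((hfin.union (hfin.image _)).insert _) this

lemma FP_drop_infinite {M : Type*} [Semigroup M] {a : Stream' M}
    (h : (Hindman.FP a).Infinite) (n : ℕ) : (Hindman.FP (a.drop n)).Infinite := by
  induction n with
  | zero => exact h
  | succ n ih =>
    have : a.drop (n + 1) = (a.drop n).tail := by
      rw [← Stream'.drop_drop, ← Stream'.tail_eq_drop]
    rw [this]
    exact FP_tail_infinite ih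

/-- in a moving semigroup, every IIP set belongs to some nonprincipal
idempotent ultrafilter. -/
theorem mem_nonprincipal_idempotent_of_isIIP {M : Type*} [Semigroup M] (hM : IsMoving M)
    (A : Set M) (hA : IsIIP A) :
    ∃ U : Ultrafilter M, U.Nonprincipal ∧ U * U = U ∧ A ∈ U := by
  obtain ⟨a, haA, hinf⟩ := hA
  set T : ℕ → Set (Ultrafilter M) := fun n =>
    { U | Hindman.FP (a.drop n) ∈ U } ∩ ⋂ x : M, { U | ({x}ᶜ : Set M) ∈ U } with hT
  have hTclosed : ∀ n, IsClosed (T n) := fun n =>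
    ((ultrafilter_isClosed_basic _).inter
      (isClosed_iInter fun x => ultrafilter_isClosed_basic _))
  have h := exists_idempotent_in_compact_subsemigroup ?_ (⋂ n, T n) ?_ ?_ ?_
  · rcases h with ⟨U, hU, U_idem⟩
    rw [Set.mem_iInter] at hU
    refine ⟨U, ?_, U_idem, ?_⟩
    · rw [Ultrafilter.nonprincipal_iff]
      intro x
      exact Set.mem_iInter.mp (hU 0).2 x
    · exact Filter.mem_of_superset (hU 0).1 (by simpa using haA)
  · exact Ultrafilter.continuous_mul_left
  · apply IsCompact.nonempty_iInter_of_sequence_nonempty_isCompact_isClosed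
    · intro n U hU
      refine ⟨?_, hU.2⟩
      have h1 : Hindman.FP (a.drop (n + 1)) ⊆ Hindman.FP (a.drop n) := by
        intro m hm
        have : a.drop (n + 1) = (a.drop n).tail := by
          rw [← Stream'.drop_drop, ← Stream'.tail_eq_drop]
        exact Hindman.FP.tail _ _ (this ▸ hm)
      exact Filter.mem_of_superset hU.1 h1
    · intro n
      have hinf' := FP_drop_infinite hinf n
      have : (cofinite ⊓ 𝓟 (Hindman.FP (a.drop n))).NeBot :=
        Filter.cofinite_inf_principal_neBot_iff.mpr hinf'
      obtain ⟨U, hU⟩ := Filter.exists_ultrafilter_le (cofinite ⊓ 𝓟 (Hindman.FP (a.drop n)))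
      refine ⟨U, ?_, ?_⟩
      · exact hU (Filter.mem_inf_of_right (Filter.mem_principal_self _))
      · rw [Set.mem_iInter]
        intro x
        exact hU (Filter.mem_inf_of_left (by simp [Filter.mem_cofinite]))
    · exact (hTclosed 0).isCompact
    · exact hTclosed
  · exact IsClosed.isCompact (isClosed_iInter fun n => hTclosed n)
  · intro U hU V hV
    rw [Set.mem_iInter] at *
    have hUnp : U.Nonprincipal := by
      rw [Ultrafilter.nonprincipal_iff]; exact fun x => Set.mem_iInter.mp (hU 0).2 x
    have hVnp : V.Nonprincipal := by
      rw [Ultrafilter.nonprincipal_iff]; exact fun x => Set.mem_iInter.mp (hV 0).2 x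
    have hprod := hM U V hUnp hVnp
    intro n
    constructor
    · show Hindman.FP (a.drop n) ∈ U * V
      have : ∀ᶠ m in ↑(U * V), m ∈ Hindman.FP (a.drop n) := by
        rw [Ultrafilter.eventually_mul]
        filter_upwards [(hU n).1] with m hm
        obtain ⟨n', hn⟩ := Hindman.FP.mul hm
        filter_upwards [(hV (n' + n)).1] with m' hm'
        apply hn
        simpa only [Stream'.drop_drop, add_comm] using hm'
      exact this
    · rw [Set.mem_iInter]
      intro x
      exact (Ultrafilter.nonprincipal_iff _).mp hprod x
end

section
/- Let (M,·) be a countable Hindman semigroup (i.e., the collection of IIP subsets of M is partition regular) and let 𝓜 be a semigroup structure based on (M,·) in a countable language. Then for every 𝓜-definable set X ⊆ M that is IIP, there is a nonprincipal idempotent complete 1-type over 𝓜 containing the formula defining X. -/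
open Filter FirstOrder FirstOrder.Language

attribute [local instance] Ultrafilter.mul

/-! ## Auxiliary lemmas for the proof -/

section AuxFP

variable {M : Type*} [Semigroup M]

theorem myFP_structure {u : Stream' M} :
    Hindman.FP u ⊆ {u.head} ∪ (Hindman.FP u.tail ∪ (fun m => u.head * m) '' Hindman.FP u.tail) := by
  intro a ha
  cases ha with
  | head' => exact Or.inl rfl
  | tail' _ m h => exact Or.inr (Or.inl h)
  | cons' _ m h => exact Or.inr (Or.inr ⟨m, h, rfl⟩)

theorem myFP_tail_infinite {u : Stream' M} (h : (Hindman.FP u).Infinite) :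
    (Hindman.FP u.tail).Infinite := by
  by_contra hfin
  rw [Set.not_infinite] at hfin
  exact h (Set.Finite.subset ((Set.finite_singleton u.head).union
    (hfin.union (hfin.image _))) myFP_structure)

end AuxFP

theorem countable_formula_aux {L : Language} (hL : Countable L.Symbols) (α : Type*) [Countable α] :
    Countable (L.Formula α) := by
  haveI : Countable L.Symbols := hL
  haveI h1 : Countable (Σ l, L.Functions l) :=
    Function.Injective.countable (f := fun x => (Sum.inl x : L.Symbols)) Sum.inl_injective
  haveI h2 : Countable (Σ l, L.Relations l) :=
    Function.Injective.countable (f := fun x => (Sum.inr x : L.Symbols)) Sum.inr_injective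
  haveI : Countable (Σ n, L.BoundedFormula α n) :=
    Function.Injective.countable (BoundedFormula.listEncode_sigma_injective)
  exact Function.Injective.countable
    (sigma_mk_injective (i := 0) (β := fun n => L.BoundedFormula α n))

section AuxRealize

variable {L : Language} {M : Type*}

/-- substitute `x` into a 2-formula, producing a 1-formula in the remaining variable `y`. -/
def form1Of (x : M) (ψ : Form2 L M) : Form1 L M :=
  ψ.subst (Sum.elim (fun m => Term.var (Sum.inl m))
    ![Term.var (Sum.inl x), Term.var (Sum.inr 0)])

theorem realize1_not (S : L.Structure M) (χ : Form1 L M) (b : M) :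
    Realize1 S χ.not b ↔ ¬ Realize1 S χ b := by
  letI : L.Structure M := S
  exact Formula.realize_not

theorem realize2_not (S : L.Structure M) (ψ : Form2 L M) (x y : M) :
    Realize2 S ψ.not x y ↔ ¬ Realize2 S ψ x y := by
  letI : L.Structure M := S
  exact Formula.realize_not

theorem realize1_form1Of (S : L.Structure M) (x b : M) (ψ : Form2 L M) :
    Realize1 S (form1Of x ψ) b ↔ Realize2 S ψ x b := by
  letI : L.Structure M := S
  show BoundedFormula.Realize (ψ.subst _) (Sum.elim id fun _ => b) default ↔
    BoundedFormula.Realize ψ (Sum.elim id ![x, b]) default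
  rw [BoundedFormula.realize_subst]
  have hfun : (fun z => Term.realize (M := M) (Sum.elim id fun _ => b)
      ((Sum.elim (fun m => (Term.var (Sum.inl m) : L.Term (M ⊕ Fin 1)))
        ![Term.var (Sum.inl x), Term.var (Sum.inr 0)]) z)) = (Sum.elim id ![x, b]) := by
    funext z
    rcases z with m | j
    · rfl
    · fin_cases j <;> rfl
  rw [hfun]

theorem realize2_substX (S : L.Structure M) (c : M) (ψ : Form2 L M) (x y : M) :
    Realize2 S (substX c ψ) x y ↔ Realize2 S ψ c y := by
  letI : L.Structure M := S
  show BoundedFormula.Realize (ψ.subst _) (Sum.elim id ![x, y]) default ↔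
    BoundedFormula.Realize ψ (Sum.elim id ![c, y]) default
  rw [BoundedFormula.realize_subst]
  have hfun : (fun z => Term.realize (M := M) (Sum.elim id ![x, y])
      ((Sum.elim (fun m => (Term.var (Sum.inl m) : L.Term (M ⊕ Fin 2)))
        ![Term.var (Sum.inl c), Term.var (Sum.inr 1)]) z)) = (Sum.elim id ![c, y]) := by
    funext z
    rcases z with m | j
    · rfl
    · fin_cases j <;> rfl
  rw [hfun]

theorem realize2_toX (S : L.Structure M) (χ : Form1 L M) (x y : M) :
    Realize2 S (toX χ) x y ↔ Realize1 S χ x := by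
  letI : L.Structure M := S
  show BoundedFormula.Realize (χ.subst _) (Sum.elim id ![x, y]) default ↔
    BoundedFormula.Realize χ (Sum.elim id fun _ => x) default
  rw [BoundedFormula.realize_subst]
  have hfun : (fun z : M ⊕ Fin 1 => Term.realize (M := M) (Sum.elim id ![x, y])
      ((Sum.elim (fun m => (Term.var (Sum.inl m) : L.Term (M ⊕ Fin 2)))
        (fun _ => Term.var (Sum.inr 0))) z)) = (Sum.elim id fun _ => x : M ⊕ Fin 1 → M) := by
    funext z
    rcases z with m | j
    · rfl
    · rfl
  rw [hfun]

theorem realize2_toY (S : L.Structure M) (χ : Form1 L M) (x y : M) :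
    Realize2 S (toY χ) x y ↔ Realize1 S χ y := by
  letI : L.Structure M := S
  show BoundedFormula.Realize (χ.subst _) (Sum.elim id ![x, y]) default ↔
    BoundedFormula.Realize χ (Sum.elim id fun _ => y) default
  rw [BoundedFormula.realize_subst]
  have hfun : (fun z : M ⊕ Fin 1 => Term.realize (M := M) (Sum.elim id ![x, y])
      ((Sum.elim (fun m => (Term.var (Sum.inl m) : L.Term (M ⊕ Fin 2)))
        (fun _ => Term.var (Sum.inr 1))) z)) = (Sum.elim id fun _ => y : M ⊕ Fin 1 → M) := by
    funext z
    rcases z with m | j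
    · rfl
    · rfl
  rw [hfun]

theorem realize2_toXY [Semigroup M] (S : L.Structure M) (f : L.Functions 2)
    (hf : ∀ x y : M, S.funMap f ![x, y] = x * y) (χ : Form1 L M) (x y : M) :
    Realize2 S (toXY f χ) x y ↔ Realize1 S χ (x * y) := by
  letI : L.Structure M := S
  show BoundedFormula.Realize (χ.subst _) (Sum.elim id ![x, y]) default ↔
    BoundedFormula.Realize χ (Sum.elim id fun _ => x * y) default
  rw [BoundedFormula.realize_subst]
  have hfun : (fun z : M ⊕ Fin 1 => Term.realize (M := M) (Sum.elim id ![x, y])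
      ((Sum.elim (fun m => (Term.var (Sum.inl m) : L.Term (M ⊕ Fin 2)))
        (fun _ => Term.func f ![Term.var (Sum.inr 0), Term.var (Sum.inr 1)])) z)) =
      (Sum.elim id fun _ => x * y : M ⊕ Fin 1 → M) := by
    funext z
    rcases z with m | j
    · rfl
    · show Structure.funMap f _ = x * y
      have harg : (fun i => Term.realize (M := M) (Sum.elim id ![x, y])
          ((![Term.var (Sum.inr 0), Term.var (Sum.inr 1)] :
            Fin 2 → L.Term (M ⊕ Fin 2)) i)) = ![x, y] := by
        funext i
        fin_cases i <;> rfl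
      rw [harg]
      exact hf x y
  rw [hfun]

theorem realize1_eqForm (S : L.Structure M) (c x : M) :
    Realize1 S ((Term.var (Sum.inr 0) : L.Term (M ⊕ Fin 1)).equal (Term.var (Sum.inl c))) x ↔
      x = c := by
  letI : L.Structure M := S
  show Formula.Realize _ _ ↔ _
  rw [Formula.realize_equal]
  exact Iff.rfl

end AuxRealize

/-- in a countable Hindman semigroup (IIP sets are partition regular), for
every semigroup structure in a countable language based on it and every definable IIP set there
is a nonprincipal idempotent complete 1-type containing the formula defining it. -/
theorem exists_nonprincipal_idempotent_type_of_hindman {M : Type*} [Semigroup M] [Countable M]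
    (hH : ∀ A : Set M, IsIIP A → ∀ Y Z : Set M, A = Y ∪ Z → IsIIP Y ∨ IsIIP Z)
    (L : Language) (hL : Countable L.Symbols) (f : L.Functions 2) (S : L.Structure M)
    (hf : ∀ x y : M, S.funMap f ![x, y] = x * y)
    (φ : Form1 L M) (hφ : IsIIP {a : M | Realize1 S φ a}) :
    ∃ p : Set (Form1 L M), φ ∈ p ∧ IsIdempotentType S f p ∧ ¬IsPrincipalType S p := by
  classical
  obtain ⟨u0, hu0X, hu0inf⟩ := hφ
  haveI : Nonempty M := ⟨u0.head⟩
  haveI : Countable (Form1 L M) := countable_formula_aux hL _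
  obtain ⟨τ, hτ⟩ := exists_surjective_nat (Form1 L M ⊕ M)
  -- the target set of each task: decide a 1-formula, or avoid a point
  let T : Form1 L M ⊕ M → Set M :=
    Sum.elim (fun χ => {a | Realize1 S χ a}) fun c => ({c}ᶜ : Set M)
  have key : ∀ (w : Stream' M) (t : Form1 L M ⊕ M), ∃ v : Stream' M,
      (Hindman.FP w).Infinite → ((Hindman.FP v).Infinite ∧ Hindman.FP v ⊆ Hindman.FP w.tail ∧
        (Hindman.FP v ⊆ T t ∨ Hindman.FP v ⊆ (T t)ᶜ)) := by
    intro w t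
    by_cases hw : (Hindman.FP w).Infinite
    · have hIIP : IsIIP (Hindman.FP w.tail) := ⟨w.tail, subset_rfl, myFP_tail_infinite hw⟩
      have hsplit := hH _ hIIP (Hindman.FP w.tail ∩ T t) (Hindman.FP w.tail ∩ (T t)ᶜ)
        (Set.inter_union_compl _ _).symm
      rcases hsplit with ⟨v, hv, hvi⟩ | ⟨v, hv, hvi⟩
      · exact ⟨v, fun _ => ⟨hvi, fun x hx => (hv hx).1, Or.inl fun x hx => (hv hx).2⟩⟩
      · exact ⟨v, fun _ => ⟨hvi, fun x hx => (hv hx).1, Or.inr fun x hx => (hv hx).2⟩⟩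
    · exact ⟨w, fun h => absurd h hw⟩
  choose nxt hnxt using key
  -- the recursively constructed chain of sequences
  let u : ℕ → Stream' M := fun n =>
    Nat.rec (motive := fun _ => Stream' M) u0 (fun k w => nxt w (τ k)) n
  have hu0 : u 0 = u0 := rfl
  have huS : ∀ k, u (k + 1) = nxt (u k) (τ k) := fun k => rfl
  have hinf : ∀ k, (Hindman.FP (u k)).Infinite := by
    intro k
    induction k with
    | zero => exact hu0inf
    | succ n ih => rw [huS n]; exact (hnxt _ _ ih).1
  have htail : ∀ k, Hindman.FP (u (k + 1)) ⊆ Hindman.FP (u k).tail := fun k => by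
    rw [huS k]; exact (hnxt _ _ (hinf k)).2.1
  have hdec : ∀ k, Hindman.FP (u (k + 1)) ⊆ T (τ k) ∨ Hindman.FP (u (k + 1)) ⊆ (T (τ k))ᶜ :=
    fun k => by rw [huS k]; exact (hnxt _ _ (hinf k)).2.2
  have hstep : ∀ k, Hindman.FP (u (k + 1)) ⊆ Hindman.FP (u k) := fun k =>
    (htail k).trans fun m hm => Hindman.FP.tail _ _ hm
  have hmono : ∀ k l, k ≤ l → Hindman.FP (u l) ⊆ Hindman.FP (u k) := by
    intro k l hkl
    induction l, hkl using Nat.le_induction with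
    | base => exact subset_rfl
    | succ n _ ih => exact (hstep n).trans ih
  have hX0 : Hindman.FP (u 0) ⊆ {a | Realize1 S φ a} := by rw [hu0]; exact hu0X
  have hne : ∀ k, (u k).head ∈ Hindman.FP (u k) := fun k => Hindman.FP.head _
  have hcompat : ∀ (A : Set M) (j l : ℕ),
      Hindman.FP (u j) ⊆ A → Hindman.FP (u l) ⊆ Aᶜ → False := by
    intro A j l h1 h2
    exact h2 (hmono l (max j l) (le_max_right _ _) (hne _))
      (h1 (hmono j (max j l) (le_max_left _ _) (hne _)))
  have hdecF : ∀ χ : Form1 L M, (∃ k, Hindman.FP (u k) ⊆ {a | Realize1 S χ a}) ∨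
      (∃ k, Hindman.FP (u k) ⊆ {a | Realize1 S χ a}ᶜ) := by
    intro χ
    obtain ⟨k, hk⟩ := hτ (Sum.inl χ)
    rcases hdec k with h | h
    · exact Or.inl ⟨k + 1, by rwa [hk] at h⟩
    · exact Or.inr ⟨k + 1, by rwa [hk] at h⟩
  have hdecP : ∀ c : M, ∃ k, Hindman.FP (u k) ⊆ ({c}ᶜ : Set M) := by
    intro c
    obtain ⟨k, hk⟩ := hτ (Sum.inr c)
    rcases hdec k with h | h
    · exact ⟨k + 1, by rwa [hk] at h⟩
    · exfalso
      rw [hk] at h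
      have h' : Hindman.FP (u (k + 1)) ⊆ ({c} : Set M) := fun x hx => not_not.1 (h hx)
      exact (Set.finite_singleton c).not_infinite ((hinf (k + 1)).mono h')
  -- the 1-type
  set p : Set (Form1 L M) := {χ | ∃ k, Hindman.FP (u k) ⊆ {a | Realize1 S χ a}} with hp_def
  have hmemp : ∀ χ : Form1 L M, χ ∈ p ↔ ∃ k, Hindman.FP (u k) ⊆ {a | Realize1 S χ a} :=
    fun χ => Iff.rfl
  have hXnot : ∀ χ : Form1 L M, {a | Realize1 S χ.not a} = {a | Realize1 S χ a}ᶜ := fun χ =>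
    Set.ext fun a => realize1_not S χ a
  have hp_comp : ∀ χ : Form1 L M, χ ∈ p ↔ χ.not ∉ p := by
    intro χ
    rw [hmemp, hmemp, hXnot]
    constructor
    · rintro ⟨k, hk⟩ ⟨l, hl⟩
      exact hcompat _ k l hk hl
    · intro h
      rcases hdecF χ with h' | h'
      · exact h'
      · exact absurd h' h
  -- helper: a uniform level for finitely many decided sets
  have hKsup1 : ∀ (s : Finset (Form1 L M)) (A : Form1 L M → Set M),
      (∀ ψ ∈ s, ∃ k, Hindman.FP (u k) ⊆ A ψ) → ∃ K, ∀ ψ ∈ s, Hindman.FP (u K) ⊆ A ψ := by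
    intro s
    induction s using Finset.induction_on with
    | empty => exact fun A _ => ⟨0, by simp⟩
    | @insert c s hc ih =>
      intro A h
      obtain ⟨K1, hK1⟩ := ih A fun ψ hψ => h ψ (Finset.mem_insert_of_mem hψ)
      obtain ⟨k0, hk0⟩ := h _ (Finset.mem_insert_self _ _)
      refine ⟨max k0 K1, fun ψ hψ => ?_⟩
      rcases Finset.mem_insert.1 hψ with rfl | hψ
      · exact (hmono _ _ (le_max_left _ _)).trans hk0
      · exact (hmono _ _ (le_max_right _ _)).trans (hK1 ψ hψ)
  have hKsup2 : ∀ (s : Finset (Form2 L M)) (A : Form2 L M → Set M),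
      (∀ ψ ∈ s, ∃ k, Hindman.FP (u k) ⊆ A ψ) → ∃ K, ∀ ψ ∈ s, Hindman.FP (u K) ⊆ A ψ := by
    intro s
    induction s using Finset.induction_on with
    | empty => exact fun A _ => ⟨0, by simp⟩
    | @insert c s hc ih =>
      intro A h
      obtain ⟨K1, hK1⟩ := ih A fun ψ hψ => h ψ (Finset.mem_insert_of_mem hψ)
      obtain ⟨k0, hk0⟩ := h _ (Finset.mem_insert_self _ _)
      refine ⟨max k0 K1, fun ψ hψ => ?_⟩
      rcases Finset.mem_insert.1 hψ with rfl | hψ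
      · exact (hmono _ _ (le_max_left _ _)).trans hk0
      · exact (hmono _ _ (le_max_right _ _)).trans (hK1 ψ hψ)
  have hfin1 : ∀ s : Finset (Form1 L M), ↑s ⊆ p → ∃ b : M, ∀ χ ∈ s, Realize1 S χ b := by
    intro s hs
    obtain ⟨K, hK⟩ := hKsup1 s _ fun χ hχ => (hmemp χ).1 (hs hχ)
    exact ⟨(u K).head, fun χ hχ => hK χ hχ (hne K)⟩
  -- the diagonal sequence of points
  set a : ℕ → M := fun i => (u i).head with ha_def
  have ha_mem : ∀ i, a i ∈ Hindman.FP (u i) := fun i => hne i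
  -- the 2-type
  set q : Set (Form2 L M) :=
    {ψ | {i | ∃ k, Hindman.FP (u k) ⊆ {b | Realize2 S ψ (a i) b}} ∈ hyperfilter ℕ} with hq_def
  have hmemq : ∀ ψ : Form2 L M, ψ ∈ q ↔
      {i | ∃ k, Hindman.FP (u k) ⊆ {b | Realize2 S ψ (a i) b}} ∈ hyperfilter ℕ :=
    fun ψ => Iff.rfl
  have hXform : ∀ (x : M) (ψ : Form2 L M),
      {b | Realize1 S (form1Of x ψ) b} = {b | Realize2 S ψ x b} :=
    fun x ψ => Set.ext fun b => realize1_form1Of S x b ψ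
  have hdecD : ∀ (ψ : Form2 L M) (x : M),
      (∃ k, Hindman.FP (u k) ⊆ {b | Realize2 S ψ x b}) ∨
      (∃ k, Hindman.FP (u k) ⊆ {b | Realize2 S ψ x b}ᶜ) := by
    intro ψ x
    rcases hdecF (form1Of x ψ) with ⟨k, hk⟩ | ⟨k, hk⟩
    · exact Or.inl ⟨k, by rwa [hXform] at hk⟩
    · exact Or.inr ⟨k, by rwa [hXform] at hk⟩
  have hDnot : ∀ (ψ : Form2 L M) (x : M),
      {b | Realize2 S ψ.not x b} = {b | Realize2 S ψ x b}ᶜ :=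
    fun ψ x => Set.ext fun b => realize2_not S ψ x b
  have hInot : ∀ ψ : Form2 L M,
      {i | ∃ k, Hindman.FP (u k) ⊆ {b | Realize2 S ψ.not (a i) b}} =
      {i | ∃ k, Hindman.FP (u k) ⊆ {b | Realize2 S ψ (a i) b}}ᶜ := by
    intro ψ
    ext i
    simp only [Set.mem_setOf_eq, Set.mem_compl_iff, hDnot]
    constructor
    · rintro ⟨k, hk⟩ ⟨l, hl⟩
      exact hcompat _ l k hl hk
    · intro h
      rcases hdecD ψ (a i) with h' | h'
      · exact absurd h' h
      · exact h'
  have hq_comp : ∀ ψ : Form2 L M, ψ ∈ q ↔ ψ.not ∉ q := by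
    intro ψ
    rw [hmemq, hmemq, hInot, Ultrafilter.compl_mem_iff_notMem]
    exact not_not.symm
  have hq_fin : ∀ s : Finset (Form2 L M), ↑s ⊆ q → ∃ x y : M, ∀ ψ ∈ s, Realize2 S ψ x y := by
    intro s hs
    have hmem : (⋂ ψ ∈ s, {i | ∃ k, Hindman.FP (u k) ⊆ {b | Realize2 S ψ (a i) b}}) ∈
        hyperfilter ℕ := by
      rw [← Ultrafilter.mem_coe]
      exact (Filter.biInter_finset_mem s).mpr fun ψ hψ => Ultrafilter.mem_coe.mpr (hs hψ)
    obtain ⟨i, hi⟩ := Ultrafilter.nonempty_of_mem hmem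
    have hex : ∀ ψ ∈ s, ∃ k, Hindman.FP (u k) ⊆ {b | Realize2 S ψ (a i) b} := by
      intro ψ hψ
      exact Set.mem_iInter₂.1 hi ψ hψ
    obtain ⟨K, hK⟩ := hKsup2 s _ hex
    exact ⟨a i, (u K).head, fun ψ hψ => hK ψ hψ (hne K)⟩
  have hq_ind : IsIndependent q := by
    intro ψ hψ
    obtain ⟨i, hi⟩ := Ultrafilter.nonempty_of_mem ((hmemq ψ).1 hψ)
    obtain ⟨k, hk⟩ := hi
    refine ⟨a i, (hmemq _).2 ?_⟩
    have hDs : ∀ j : ℕ, {b | Realize2 S (substX (a i) ψ) (a j) b} = {b | Realize2 S ψ (a i) b} :=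
      fun j => Set.ext fun b => realize2_substX S (a i) ψ (a j) b
    have : {j : ℕ | ∃ k', Hindman.FP (u k') ⊆ {b | Realize2 S (substX (a i) ψ) (a j) b}} =
        Set.univ := Set.eq_univ_of_forall fun j => ⟨k, by rw [hDs j]; exact hk⟩
    rw [this, ← Ultrafilter.mem_coe]
    exact Filter.univ_mem
  have htailmem : ∀ k : ℕ, {i : ℕ | k ≤ i} ∈ hyperfilter ℕ := by
    intro k
    rw [← Ultrafilter.mem_coe]
    apply Filter.hyperfilter_le_cofinite
    rw [Filter.mem_cofinite]
    have : {i : ℕ | k ≤ i}ᶜ = {i | i < k} := by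
      ext i; simp [Nat.not_le]
    rw [this]
    exact Set.finite_lt_nat k
  have hq_x : ∀ χ ∈ p, toX χ ∈ q := by
    intro χ hχ
    obtain ⟨k, hk⟩ := (hmemp χ).1 hχ
    refine (hmemq _).2 ?_
    rw [← Ultrafilter.mem_coe]
    refine Filter.mem_of_superset (Ultrafilter.mem_coe.mpr (htailmem k)) ?_
    intro i hi
    have hrx : Realize1 S χ (a i) := hk (hmono k i hi (hne i))
    exact ⟨0, fun b _ => (realize2_toX S χ (a i) b).mpr hrx⟩
  have hq_y : ∀ χ ∈ p, toY χ ∈ q := by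
    intro χ hχ
    obtain ⟨k, hk⟩ := (hmemp χ).1 hχ
    refine (hmemq _).2 ?_
    have : {i : ℕ | ∃ k', Hindman.FP (u k') ⊆ {b | Realize2 S (toY χ) (a i) b}} = Set.univ :=
      Set.eq_univ_of_forall fun i => ⟨k, fun b hb => (realize2_toY S χ (a i) b).mpr (hk hb)⟩
    rw [this, ← Ultrafilter.mem_coe]
    exact Filter.univ_mem
  have hq_xy : ∀ χ ∈ p, toXY f χ ∈ q := by
    intro χ hχ
    obtain ⟨k, hk⟩ := (hmemp χ).1 hχ
    refine (hmemq _).2 ?_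
    rw [← Ultrafilter.mem_coe]
    refine Filter.mem_of_superset (Ultrafilter.mem_coe.mpr (htailmem k)) ?_
    intro i hi
    refine ⟨i + 1, fun b hb => ?_⟩
    have hmul : a i * b ∈ Hindman.FP (u i) := Hindman.FP.cons _ _ (htail i hb)
    exact (realize2_toXY S f hf χ (a i) b).mpr (hk (hmono k i hi hmul))
  have hnp : ¬IsPrincipalType S p := by
    rintro ⟨c, hc⟩
    have hχ : ((Term.var (Sum.inr 0) : L.Term (M ⊕ Fin 1)).equal
        (Term.var (Sum.inl c))).not ∈ p := by
      obtain ⟨k, hk⟩ := hdecP c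
      refine (hmemp _).2 ⟨k, fun x hx => ?_⟩
      have hxc : x ≠ c := hk hx
      show Realize1 S _ x
      rw [realize1_not, realize1_eqForm]
      exact hxc
    have := hc _ hχ
    rw [realize1_not, realize1_eqForm] at this
    exact this rfl
  exact ⟨p, (hmemp φ).2 ⟨0, hX0⟩, ⟨⟨hp_comp, hfin1⟩, q, ⟨hq_comp, hq_fin⟩, hq_ind,
    hq_x, hq_y, hq_xy⟩, hnp⟩
end

section
/- Let (M,·) be a countable semigroup and suppose that for every semigroup structure 𝓜 based on (M,·) in a countable language and every 𝓜-definable IIP set X ⊆ M there is a nonprincipal idempotent complete 1-type over 𝓜 containing the formula defining X. Then (M,·) is really Hindman: whenever X ⊆ M is IIP and X = Y ∪ Z, one of Y or Z is DIP. -/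
open Filter FirstOrder FirstOrder.Language

attribute [local instance] Ultrafilter.mul

/-! ## Auxiliary development -/

section Aux

variable {L : Language} {M : Type*} {S : L.Structure M}

/-- `shiftF f u ψ` is the formula `ψ(u · y)`. -/
def shiftF {L : Language} {M : Type*} (f : L.Functions 2) (u : M) (ψ : Form1 L M) : Form1 L M :=
  ψ.subst (Sum.elim (fun m => Term.var (Sum.inl m))
    fun _ => Term.func f ![Term.var (Sum.inl u), Term.var (Sum.inr 0)])

lemma realize1_not_s12 (φ : Form1 L M) (a : M) : Realize1 S φ.not a ↔ ¬ Realize1 S φ a := by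
  unfold Realize1; exact Formula.realize_not

lemma realize1_inf (φ ψ : Form1 L M) (a : M) :
    Realize1 S (φ ⊓ ψ) a ↔ Realize1 S φ a ∧ Realize1 S ψ a := by
  unfold Realize1; exact Formula.realize_inf

lemma realize1_top (a : M) : Realize1 S (⊤ : Form1 L M) a := by
  unfold Realize1; exact Formula.realize_top.2 trivial

lemma realize2_not_s12 (φ : Form2 L M) (a b : M) : Realize2 S φ.not a b ↔ ¬ Realize2 S φ a b := by
  unfold Realize2; exact Formula.realize_not

lemma realize2_inf (φ ψ : Form2 L M) (a b : M) :
    Realize2 S (φ ⊓ ψ) a b ↔ Realize2 S φ a b ∧ Realize2 S ψ a b := by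
  unfold Realize2; exact Formula.realize_inf

lemma realize_substX (u : M) (φ : Form2 L M) (a b : M) :
    Realize2 S (substX u φ) a b ↔ Realize2 S φ u b := by
  unfold Realize2 substX
  rw [Formula.Realize, BoundedFormula.realize_subst]
  apply Iff.of_eq; congr 1
  funext v
  rcases v with m | i
  · rfl
  · fin_cases i <;> simp [Term.realize]

lemma realize_toX (φ : Form1 L M) (a b : M) :
    Realize2 S (toX φ) a b ↔ Realize1 S φ a := by
  unfold Realize2 Realize1 toX
  rw [Formula.Realize, BoundedFormula.realize_subst]
  apply Iff.of_eq; congr 1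
  funext v
  rcases v with m | i
  · rfl
  · fin_cases i <;> simp [Term.realize]

lemma realize_toY (φ : Form1 L M) (a b : M) :
    Realize2 S (toY φ) a b ↔ Realize1 S φ b := by
  unfold Realize2 Realize1 toY
  rw [Formula.Realize, BoundedFormula.realize_subst]
  apply Iff.of_eq; congr 1
  funext v
  rcases v with m | i
  · rfl
  · fin_cases i <;> simp [Term.realize]

lemma realize_toXY [Mul M] (f : L.Functions 2)
    (hf : ∀ x y : M, S.funMap f ![x, y] = x * y) (φ : Form1 L M) (a b : M) :
    Realize2 S (toXY f φ) a b ↔ Realize1 S φ (a * b) := by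
  unfold Realize2 Realize1 toXY
  rw [Formula.Realize, BoundedFormula.realize_subst]
  apply Iff.of_eq; congr 1
  funext v
  rcases v with m | i
  · rfl
  · fin_cases i
    simp only [Term.realize]
    rw [← hf a b]; simp only [Sum.elim_inr, Term.realize]; congr 1; funext i; fin_cases i <;> simp [Term.realize]

lemma realize_shiftF [Mul M] (f : L.Functions 2)
    (hf : ∀ x y : M, S.funMap f ![x, y] = x * y) (u : M) (φ : Form1 L M) (a : M) :
    Realize1 S (shiftF f u φ) a ↔ Realize1 S φ (u * a) := by
  unfold Realize1 shiftF
  rw [Formula.Realize, BoundedFormula.realize_subst]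
  apply Iff.of_eq; congr 1
  funext v
  rcases v with m | i
  · rfl
  · fin_cases i
    simp only [Term.realize]
    rw [← hf u a]; simp only [Sum.elim_inr, Term.realize]; congr 1; funext i; fin_cases i <;> simp [Term.realize]

variable {p : Set (Form1 L M)} {q : Set (Form2 L M)}

lemma p_ex (hp : IsCompleteType1 S p) {θ : Form1 L M} (hθ : θ ∈ p) :
    ∃ a : M, Realize1 S θ a := by
  classical
  obtain ⟨a, ha⟩ := hp.2 {θ} (by simp [hθ])
  exact ⟨a, ha θ (by simp)⟩

lemma q_ex (hq : IsCompleteType2 S q) {θ : Form2 L M} (hθ : θ ∈ q) :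
    ∃ a b : M, Realize2 S θ a b := by
  classical
  obtain ⟨a, b, hab⟩ := hq.2 {θ} (by simp [hθ])
  exact ⟨a, b, hab θ (by simp)⟩

lemma p_not_mem (hp : IsCompleteType1 S p) {θ : Form1 L M} (hθ : θ ∉ p) : θ.not ∈ p :=
  by_contra fun h' => hθ ((hp.1 θ).2 h')

lemma q_not_mem (hq : IsCompleteType2 S q) {θ : Form2 L M} (hθ : θ ∉ q) : θ.not ∈ q :=
  by_contra fun h' => hθ ((hq.1 θ).2 h')

lemma p_sem (hp : IsCompleteType1 S p) {α β : Form1 L M} (hα : α ∈ p)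
    (h : ∀ a, Realize1 S α a → Realize1 S β a) : β ∈ p := by
  classical
  by_contra hβ
  have hβn := p_not_mem hp hβ
  obtain ⟨a, ha⟩ := hp.2 {α, β.not} (by
    intro φ hφ
    simp only [Finset.coe_insert, Finset.coe_singleton, Set.mem_insert_iff,
      Set.mem_singleton_iff] at hφ
    rcases hφ with rfl | rfl <;> assumption)
  have h1 := ha α (by simp)
  have h2 := ha β.not (by simp)
  exact (realize1_not_s12 β a).1 h2 (h a h1)

lemma q_sem (hq : IsCompleteType2 S q) {α β : Form2 L M} (hα : α ∈ q)
    (h : ∀ a b, Realize2 S α a b → Realize2 S β a b) : β ∈ q := by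
  classical
  by_contra hβ
  have hβn := q_not_mem hq hβ
  obtain ⟨a, b, ha⟩ := hq.2 {α, β.not} (by
    intro φ hφ
    simp only [Finset.coe_insert, Finset.coe_singleton, Set.mem_insert_iff,
      Set.mem_singleton_iff] at hφ
    rcases hφ with rfl | rfl <;> assumption)
  have h1 := ha α (by simp)
  have h2 := ha β.not (by simp)
  exact (realize2_not_s12 β a b).1 h2 (h a b h1)

lemma p_top (hp : IsCompleteType1 S p) : (⊤ : Form1 L M) ∈ p := by
  by_contra h
  obtain ⟨a, ha⟩ := p_ex hp (p_not_mem hp h)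
  exact (realize1_not_s12 _ a).1 ha (realize1_top a)

lemma p_inf (hp : IsCompleteType1 S p) {α β : Form1 L M} (hα : α ∈ p) (hβ : β ∈ p) :
    α ⊓ β ∈ p := by
  classical
  by_contra h
  have hn := p_not_mem hp h
  obtain ⟨a, ha⟩ := hp.2 {α, β, (α ⊓ β).not} (by
    intro φ hφ
    simp only [Finset.coe_insert, Finset.coe_singleton, Set.mem_insert_iff,
      Set.mem_singleton_iff] at hφ
    rcases hφ with rfl | rfl | rfl <;> assumption)
  have h1 := ha α (by simp)
  have h2 := ha β (by simp)
  have h3 := ha (α ⊓ β).not (by simp)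
  exact (realize1_not_s12 _ a).1 h3 ((realize1_inf α β a).2 ⟨h1, h2⟩)

lemma q_inf (hq : IsCompleteType2 S q) {α β : Form2 L M} (hα : α ∈ q) (hβ : β ∈ q) :
    α ⊓ β ∈ q := by
  classical
  by_contra h
  have hn := q_not_mem hq h
  obtain ⟨a, b, ha⟩ := hq.2 {α, β, (α ⊓ β).not} (by
    intro φ hφ
    simp only [Finset.coe_insert, Finset.coe_singleton, Set.mem_insert_iff,
      Set.mem_singleton_iff] at hφ
    rcases hφ with rfl | rfl | rfl <;> assumption)
  have h1 := ha α (by simp)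
  have h2 := ha β (by simp)
  have h3 := ha (α ⊓ β).not (by simp)
  exact (realize2_not_s12 _ a b).1 h3 ((realize2_inf α β a b).2 ⟨h1, h2⟩)

lemma p_list (hp : IsCompleteType1 S p) (l : List (Form1 L M)) (hl : ∀ φ ∈ l, φ ∈ p) :
    ∃ θ ∈ p, ∀ a : M, Realize1 S θ a ↔ ∀ φ ∈ l, Realize1 S φ a := by
  induction l with
  | nil => exact ⟨⊤, p_top hp, fun a => by simp [realize1_top a]⟩
  | cons hd tl ih =>
    obtain ⟨θ, hθ, hθr⟩ := ih fun φ hφ => hl φ (List.mem_cons_of_mem _ hφ)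
    refine ⟨hd ⊓ θ, p_inf hp (hl hd (List.mem_cons_self)) hθ, fun a => ?_⟩
    rw [realize1_inf, hθr]
    simp [List.forall_mem_cons]

lemma toY_mem (hp : IsCompleteType1 S p) (hq : IsCompleteType2 S q)
    (hY : ∀ φ ∈ p, toY φ ∈ q) {φ : Form1 L M} (h : toY φ ∈ q) : φ ∈ p := by
  by_contra hφ
  have h2 : toY φ.not ∈ q := hY _ (p_not_mem hp hφ)
  have h3 : (toY φ).not ∈ q := q_sem hq h2 (fun a b hr => by
    rw [realize2_not_s12, realize_toY]
    exact (realize1_not_s12 φ b).1 ((realize_toY φ.not a b).1 hr))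
  obtain ⟨a, b, hab⟩ := q_ex hq (q_inf hq h h3)
  rw [realize2_inf] at hab
  exact (realize2_not_s12 _ a b).1 hab.2 hab.1

/-- The key step lemma for the Galvin–Glazer-style recursion. -/
lemma stepB [Semigroup M] (f : L.Functions 2)
    (hf : ∀ x y : M, S.funMap f ![x, y] = x * y)
    (hp : IsCompleteType1 S p) (hq : IsCompleteType2 S q) (hind : IsIndependent q)
    (hX : ∀ φ ∈ p, toX φ ∈ q) (hY : ∀ φ ∈ p, toY φ ∈ q) (hXY : ∀ φ ∈ p, toXY f φ ∈ q)
    (hnp : ¬ IsPrincipalType S p) {ψ : Form1 L M} (hψ : ψ ∈ p)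
    (E F : List M) (hE : ∀ w ∈ E, shiftF f w ψ ∈ p) :
    ∃ u : M, u ∉ F ∧ Realize1 S ψ u ∧ shiftF f u ψ ∈ p ∧
      (∀ w ∈ E, Realize1 S ψ (w * u)) ∧ (∀ w ∈ E, shiftF f (w * u) ψ ∈ p) := by
  classical
  have hchi : ∀ a : M, ∃ χ ∈ p, ¬ Realize1 S χ a := by
    intro a
    by_contra h'
    push_neg at h'
    exact hnp ⟨a, h'⟩
  set l : List (Form1 L M) :=
    ψ :: (E.map (fun w => shiftF f w ψ) ++ F.map (fun a => (hchi a).choose)) with hldef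
  have memψ : ψ ∈ l := List.mem_cons_self
  have memshift : ∀ w ∈ E, shiftF f w ψ ∈ l := fun w hw =>
    List.mem_cons_of_mem _ (List.mem_append_left _ (List.mem_map_of_mem hw))
  have memchi : ∀ a ∈ F, (hchi a).choose ∈ l := fun a ha =>
    List.mem_cons_of_mem _ (List.mem_append_right _ (List.mem_map_of_mem ha))
  have hl : ∀ φ ∈ l, φ ∈ p := by
    intro φ hφ
    rw [hldef] at hφ
    rcases List.mem_cons.1 hφ with rfl | hφ
    · exact hψ
    rcases List.mem_append.1 hφ with hφ | hφ
    · obtain ⟨w, hw, rfl⟩ := List.mem_map.1 hφ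
      exact hE w hw
    · obtain ⟨a, _, rfl⟩ := List.mem_map.1 hφ
      exact (hchi a).choose_spec.1
  obtain ⟨θ, hθp, hθr⟩ := p_list hp l hl
  have hρ : toX θ ⊓ toXY f θ ∈ q := q_inf hq (hX θ hθp) (hXY θ hθp)
  obtain ⟨u, hu⟩ := hind _ hρ
  obtain ⟨a, b, hab⟩ := q_ex hq hu
  rw [realize_substX, realize2_inf, realize_toX, realize_toXY f hf] at hab
  have hθu : Realize1 S θ u := hab.1
  have h2 : toY (shiftF f u θ) ∈ q := q_sem hq hu (fun a b hr => by
    rw [realize_substX, realize2_inf, realize_toXY f hf] at hr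
    rw [realize_toY, realize_shiftF f hf]
    exact hr.2)
  have h3 : shiftF f u θ ∈ p := toY_mem hp hq hY h2
  have hlu := (hθr u).1 hθu
  have hunF : u ∉ F := by
    intro huF
    exact (hchi u).choose_spec.2 (hlu _ (memchi u huF))
  refine ⟨u, hunF, hlu ψ memψ, ?_, ?_, ?_⟩
  · refine p_sem hp h3 (fun a ha => ?_)
    rw [realize_shiftF f hf] at ha ⊢
    exact ((hθr (u * a)).1 ha) ψ memψ
  · intro w hw
    have := hlu _ (memshift w hw)
    rwa [realize_shiftF f hf] at this
  · intro w hw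
    refine p_sem hp h3 (fun a ha => ?_)
    rw [realize_shiftF f hf] at ha
    have := ((hθr (u * a)).1 ha) (shiftF f w ψ) (memshift w hw)
    rw [realize_shiftF f hf] at this ⊢
    rwa [mul_assoc]

/-- Every formula in a nonprincipal idempotent type defines a DIP set. -/
lemma main_dip [Semigroup M] (f : L.Functions 2)
    (hf : ∀ x y : M, S.funMap f ![x, y] = x * y)
    (hp : IsIdempotentType S f p) (hnp : ¬ IsPrincipalType S p)
    {ψ : Form1 L M} (hψ : ψ ∈ p) : IsDIP {a : M | Realize1 S ψ a} := by
  classical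
  obtain ⟨hc1, q, hc2, hind, hX, hY, hXY⟩ := hp
  obtain ⟨a0, -⟩ := p_ex hc1 (p_top hc1)
  have hstep := stepB f hf hc1 hc2 hind hX hY hXY hnp hψ
  set step : List M × List M → M := fun s =>
    if h : ∀ w ∈ s.1, shiftF f w ψ ∈ p then (hstep s.1 s.2 h).choose else a0 with hstepdef
  set st : ℕ → List M × List M := fun n => Nat.rec (([], []) : List M × List M)
    (fun _ s => ((step s) :: (s.1 ++ s.1.map (· * step s)), (step s) :: s.2)) n with hstdef
  set useq : ℕ → M := fun n => step (st n) with husdef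
  have hstS : ∀ n, st (n + 1) =
      (useq n :: ((st n).1 ++ (st n).1.map (· * useq n)), useq n :: (st n).2) := fun n => rfl
  have inv : ∀ n, ∀ w ∈ (st n).1, shiftF f w ψ ∈ p := by
    intro n
    induction n with
    | zero => intro w hw; simp [hstdef] at hw
    | succ n ih =>
      have husn : useq n = (hstep (st n).1 (st n).2 ih).choose := by
        rw [husdef]; simp only [hstepdef]; rw [dif_pos ih]
      have spec := (hstep (st n).1 (st n).2 ih).choose_spec
      rw [← husn] at spec
      intro w hw
      rw [hstS n] at hw
      rcases List.mem_cons.1 hw with rfl | hw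
      · exact spec.2.2.1
      rcases List.mem_append.1 hw with hw | hw
      · exact ih w hw
      · obtain ⟨w', hw', rfl⟩ := List.mem_map.1 hw
        exact spec.2.2.2.2 w' hw'
  have spec : ∀ n, useq n ∉ (st n).2 ∧ Realize1 S ψ (useq n) ∧ shiftF f (useq n) ψ ∈ p ∧
      (∀ w ∈ (st n).1, Realize1 S ψ (w * useq n)) ∧
      (∀ w ∈ (st n).1, shiftF f (w * useq n) ψ ∈ p) := by
    intro n
    have husn : useq n = (hstep (st n).1 (st n).2 (inv n)).choose := by
      rw [husdef]; simp only [hstepdef]; rw [dif_pos (inv n)]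
    rw [husn]
    exact (hstep (st n).1 (st n).2 (inv n)).choose_spec
  have memF : ∀ i n, i < n → useq i ∈ (st n).2 := by
    intro i n
    induction n with
    | zero => omega
    | succ n ih =>
      intro hin
      rw [hstS n]
      rcases Nat.lt_succ_iff_lt_or_eq.1 hin with h | rfl
      · exact List.mem_cons_of_mem _ (ih h)
      · exact List.mem_cons_self
  have hinj : Function.Injective useq := by
    intro i j hij
    by_contra hne
    rcases lt_or_gt_of_ne hne with h | h
    · exact (spec j).1 (hij ▸ memF i j h)
    · exact (spec i).1 (hij.symm ▸ memF j i h)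
  have Emono : ∀ n j, j ≤ n → ∀ w ∈ (st j).1, w ∈ (st n).1 := by
    intro n
    induction n with
    | zero => intro j hj w hw; rw [Nat.le_zero.1 hj] at hw; exact hw
    | succ n ih =>
      intro j hj w hw
      by_cases hj' : j = n + 1
      · exact hj' ▸ hw
      · have hle : j ≤ n := by omega
        have := ih j hle w hw
        rw [hstS n]
        exact List.mem_cons_of_mem _ (List.mem_append_left _ this)
  have EmemU : ∀ n, useq n ∈ (st (n + 1)).1 := fun n => by
    rw [hstS n]; exact List.mem_cons_self
  have EmemP : ∀ n, ∀ w ∈ (st n).1, w * useq n ∈ (st (n + 1)).1 := fun n w hw => by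
    rw [hstS n]
    exact List.mem_cons_of_mem _ (List.mem_append_right _ (List.mem_map_of_mem hw))
  have mainC : ∀ (a : Stream' M) (m : M), m ∈ Hindman.FP a → ∀ n,
      a = Stream'.drop n useq →
      Realize1 S ψ m ∧ ∀ w j, j ≤ n → w ∈ (st j).1 → Realize1 S ψ (w * m) := by
    intro a m hm
    induction hm with
    | head' a =>
      intro n ha
      rw [ha, Stream'.head_drop useq n]
      constructor
      · exact (spec n).2.1
      · intro w j hj hw
        exact (spec n).2.2.2.1 w (Emono n j hj w hw)
    | tail' a m h ih =>
      intro n ha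
      have ht : a.tail = Stream'.drop (n + 1) useq := by rw [ha]; exact Stream'.tail_drop'
      obtain ⟨h1, h2⟩ := ih (n + 1) ht
      exact ⟨h1, fun w j hj hw => h2 w j (Nat.le_succ_of_le hj) hw⟩
    | cons' a m h ih =>
      intro n ha
      have ht : a.tail = Stream'.drop (n + 1) useq := by rw [ha]; exact Stream'.tail_drop'
      have hh : a.head = useq n := by rw [ha, Stream'.head_drop useq n]; rfl
      obtain ⟨h1, h2⟩ := ih (n + 1) ht
      constructor
      · rw [hh]
        exact h2 (useq n) (n + 1) le_rfl (EmemU n)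
      · intro w j hj hw
        rw [hh, ← mul_assoc]
        exact h2 (w * useq n) (n + 1) le_rfl (EmemP n w (Emono n j hj w hw))
  exact ⟨useq, hinj, fun m hm => (mainC useq m hm 0 rfl).1⟩

end Aux

/-! ## A concrete language and structure -/

/-- The language with one binary function symbol and two unary relation symbols. -/
def myL : Language :=
  ⟨fun n => match n with | 2 => Unit | _ => Empty,
   fun n => match n with | 1 => Bool | _ => Empty⟩

/-- The binary function symbol of `myL`. -/
def myFun : myL.Functions 2 := Unit.unit

/-- The unary relation symbols of `myL`. -/
def myRel (b : Bool) : myL.Relations 1 := b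

instance : Countable myL.Symbols := by
  haveI hF : ∀ n, Countable (myL.Functions n) := fun n =>
    match n with
    | 0 => inferInstanceAs (Countable Empty)
    | 1 => inferInstanceAs (Countable Empty)
    | 2 => inferInstanceAs (Countable Unit)
    | (_ + 3) => inferInstanceAs (Countable Empty)
  haveI hR : ∀ n, Countable (myL.Relations n) := fun n =>
    match n with
    | 0 => inferInstanceAs (Countable Empty)
    | 1 => inferInstanceAs (Countable Bool)
    | (_ + 2) => inferInstanceAs (Countable Empty)
  unfold Language.Symbols
  infer_instance

/-- The structure on `M` interpreting the function symbol as multiplication and the relation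
symbols as membership in `X` and `Y`. -/
def myS {M : Type*} [Mul M] (X Y : Set M) : myL.Structure M where
  funMap {n} f v :=
    match n, f with
    | 2, _ => v 0 * v 1
  RelMap {n} r v :=
    match n, r with
    | 1, true => v 0 ∈ X
    | 1, false => v 0 ∈ Y

lemma myS_funMap {M : Type*} [Mul M] (X Y : Set M) (x y : M) :
    (myS X Y).funMap myFun ![x, y] = x * y := rfl

/-- The formula asserting the relation `b` of the free variable. -/
def myForm (b : Bool) {M : Type*} : Form1 myL M :=
  Relations.formula₁ (myRel b) (Term.var (Sum.inr 0))

lemma realize_myForm {M : Type*} [Mul M] (X Y : Set M) (b : Bool) (a : M) :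
    Realize1 (myS X Y) (myForm b) a ↔ (if b then a ∈ X else a ∈ Y) := by
  letI : myL.Structure M := myS X Y
  unfold Realize1 myForm
  rw [show (myS X Y) = this from rfl, Formula.realize_rel₁]
  cases b <;> rfl

/-- if for every semigroup structure based on the countable semigroup `(M, ·)`
in a countable language every definable IIP set is contained in some nonprincipal idempotent
complete 1-type, then `(M, ·)` is really Hindman: whenever `X` is IIP and `X = Y ∪ Z`, one of
`Y`, `Z` is DIP. -/
theorem really_hindman_of_exists_nonprincipal_idempotent_type {M : Type*} [Semigroup M]
    [Countable M]
    (h : ∀ (L : FirstOrder.Language.{0, 0}), Countable L.Symbols →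
      ∀ (f : L.Functions 2) (S : L.Structure M),
        (∀ x y : M, S.funMap f ![x, y] = x * y) →
        ∀ φ : Form1 L M, IsIIP {a : M | Realize1 S φ a} →
          ∃ p : Set (Form1 L M), φ ∈ p ∧ IsIdempotentType S f p ∧ ¬IsPrincipalType S p)
    (X Y Z : Set M) (hX : IsIIP X) (hXYZ : X = Y ∪ Z) : IsDIP Y ∨ IsDIP Z := by
  classical
  have hfS : ∀ x y : M, (myS X Y).funMap myFun ![x, y] = x * y := myS_funMap X Y
  have hXset : {a : M | Realize1 (myS X Y) (myForm true) a} = X := by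
    ext a; rw [Set.mem_setOf_eq, realize_myForm]; simp
  have hYpt : ∀ a : M, Realize1 (myS X Y) (myForm false) a ↔ a ∈ Y := fun a => by
    rw [realize_myForm]; simp
  obtain ⟨p, hφXp, hidem, hnp⟩ := h myL inferInstance myFun (myS X Y) hfS (myForm true)
    (by rw [hXset]; exact hX)
  by_cases hYmem : (myForm false : Form1 myL M) ∈ p
  · left
    obtain ⟨u, hu1, hu2⟩ := main_dip myFun hfS hidem hnp hYmem
    exact ⟨u, hu1, fun m hm => (hYpt m).1 (hu2 hm)⟩
  · right
    have hc1 := hidem.1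
    have hmem : (myForm true ⊓ (myForm false).not : Form1 myL M) ∈ p :=
      p_inf hc1 hφXp (p_not_mem hc1 hYmem)
    obtain ⟨u, hu1, hu2⟩ := main_dip myFun hfS hidem hnp hmem
    refine ⟨u, hu1, fun m hm => ?_⟩
    have hm' := hu2 hm
    rw [Set.mem_setOf_eq, realize1_inf, realize1_not_s12] at hm'
    have hmX : m ∈ X := by
      have := hm'.1
      rw [realize_myForm] at this
      simpa using this
    have hmY : m ∉ Y := fun hy => hm'.2 ((hYpt m).2 hy)
    rcases hXYZ ▸ hmX with hy | hz
    · exact absurd hy hmY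
    · exact hz
end
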